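/- Let α ∈ (1,2) and define q_α(y; c) := (α−1) c^{1−α/2} (1+c)^{α−1} (y+c)^{α/2} y^{α−1} ∫_y^1 (y+cv)^{−α} (1−v)^{α/2−1} dv for 0 < y < 1 and c > 0, with q_α(0;c) := lim_{y→0} q_α(y;c). Then: (a) for every c > 0 and all 0 ≤ y < 1, q_α(y; c) ≥ (α−1) c^{1−α/2} (c+y)^{α/2−1} (1−y); (b) for every c > 0, lim_{y→0} q_α(y; c) = 1; and (c) under hypotheses (I) and (S_α) with α ∈ (1,2), for every δ > 0, sup_{δ ≤ y ≤ 1} q_α(y; c) < 1. -/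

import Mathlib

open MeasureTheory ProbabilityTheory Filter Topology Set

noncomputable section

namespace IDLAPaper

variable {Ω : Type*}

/-- The random walk started at `x : ℤ` whose increments are `ξ 0, ξ 1, …`. -/
def walk (x : ℤ) (ξ : ℕ → Ω → ℤ) (n : ℕ) (ω : Ω) : ℤ :=
  x + ∑ i ∈ Finset.range n, ξ i ω

/-- The increments `ξ i` are i.i.d. under `P`. -/
def IsIID [MeasurableSpace Ω] (P : Measure Ω) (ξ : ℕ → Ω → ℤ) : Prop :=
  (∀ i, Measurable (ξ i)) ∧ iIndepFun ξ P ∧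
    ∀ i, Measure.map (ξ i) P = Measure.map (ξ 0) P

/-- Hypothesis (I): irreducibility of the random walk on `ℤ`. -/
def HypI [MeasurableSpace Ω] (P : Measure Ω) (ξ : ℕ → Ω → ℤ) : Prop :=
  ∀ x y : ℤ, ∃ n : ℕ, 0 < n ∧ 0 < P {ω | walk x ξ n ω = y}

/-- Hypothesis (S_α): symmetric increments in the domain of normal attraction of a
symmetric `α`-stable law, stated via the characteristic function. -/
def HypS [MeasurableSpace Ω] (P : Measure Ω) (ξ : ℕ → Ω → ℤ) (α : ℝ) : Prop :=
  Measure.map (fun ω => -ξ 0 ω) P = Measure.map (ξ 0) P ∧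
    ∃ β : ℝ, 0 < β ∧
      Tendsto (fun t : ℝ =>
          ((|t| ^ (-α) : ℝ) : ℂ) *
            (1 - ∫ ω, Complex.exp (Complex.I * (t : ℂ) * ((ξ 0 ω : ℤ) : ℂ)) ∂P))
        (𝓝[≠] (0 : ℝ)) (𝓝 ((β : ℝ) : ℂ))

/-- Hypothesis (M): zero mean and finite, positive variance. -/
def HypM [MeasurableSpace Ω] (P : Measure Ω) (ξ : ℕ → Ω → ℤ) : Prop :=
  Integrable (fun ω => ((ξ 0 ω : ℤ) : ℝ) ^ 2) P ∧
    0 < ∫ ω, ((ξ 0 ω : ℤ) : ℝ) ^ 2 ∂P ∧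
    ∫ ω, ((ξ 0 ω : ℤ) : ℝ) ∂P = 0

/-- Strict ascending ladder times of a path `S` (with the convention `sInf ∅ = 0`). -/
def ladderTime (S : ℕ → ℤ) : ℕ → ℕ
  | 0 => 0
  | k + 1 => sInf {n : ℕ | ladderTime S k < n ∧ S (ladderTime S k) < S n}

/-- Ladder heights of a path `S`. -/
def ladderHeight (S : ℕ → ℤ) (n : ℕ) : ℤ := S (ladderTime S n)

/-- The renewal counting process `N_y` of the ladder-height process. -/
def renewalCount (S : ℕ → ℤ) (y : ℤ) : ℕ :=
  sInf {n : ℕ | 0 < n ∧ y < ladderHeight S n}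

/-- The residual lifetime (overshoot) `Z_y = L_{N_y} - y`. -/
def residual (S : ℕ → ℤ) (y : ℤ) : ℤ := ladderHeight S (renewalCount S y) - y

/-- The ladder increment `Y = L_1 - L_0` for the walk started at `0`. -/
def ladderY (ξ : ℕ → Ω → ℤ) (ω : Ω) : ℤ := ladderHeight (fun n => walk 0 ξ n ω) 1

/-- The limit function `q_α(y; c)` of Lemma 2.8(ii), with `q_α(0; c)` defined to be the
value `1` of its limit as `y → 0` (as asserted in part (b)). -/
def qAlpha (α c y : ℝ) : ℝ :=
  if y = 0 then 1
  else (α - 1) * c ^ (1 - α / 2) * (1 + c) ^ (α - 1) * (y + c) ^ (α / 2) * y ^ (α - 1) *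
    ∫ v in y..1, (y + c * v) ^ (-α) * (1 - v) ^ (α / 2 - 1)


variable {α c y : ℝ}

private lemma base_pos (hc : 0 < c) (hy : 0 < y) {v : ℝ} (hv : y ≤ v) : 0 < y + c * v := by
  nlinarith

private lemma integrable_one_sub (hα : 1 < α) (hy1 : y ≤ 1) :
    IntervalIntegrable (fun v : ℝ => (1 - v) ^ (α / 2 - 1)) volume y 1 := by
  have h0 : IntervalIntegrable (fun x : ℝ => x ^ (α / 2 - 1)) volume 0 (1 - y) :=
    intervalIntegral.intervalIntegrable_rpow' (by linarith)
  have := h0.comp_sub_left 1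
  simpa using this.symm

private lemma cont_base (hc : 0 < c) (hy : 0 < y) (hy1 : y ≤ 1) {p : ℝ} :
    ContinuousOn (fun v : ℝ => (y + c * v) ^ p) (uIcc y 1) := by
  apply ContinuousOn.rpow_const (by fun_prop)
  intro v hv
  rw [uIcc_of_le hy1] at hv
  exact Or.inl (base_pos hc hy hv.1).ne'

private lemma integrable_aux (hα1 : 1 < α) (hc : 0 < c) (hy : 0 < y) (hy1 : y ≤ 1) :
    IntervalIntegrable (fun v => (y + c * v) ^ (-α) * (1 - v) ^ (α / 2 - 1)) volume y 1 :=
  (integrable_one_sub hα1 hy1).continuousOn_mul (cont_base hc hy hy1)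

private lemma integral_pow_eq (hα1 : 1 < α) (hc : 0 < c) (hy : 0 < y) (hy1 : y ≤ 1) :
    ∫ v in y..1, (y + c * v) ^ (-α)
      = ((y + c) ^ (1 - α) - (y + c * y) ^ (1 - α)) / (c * (1 - α)) := by
  have hne : c * (1 - α) ≠ 0 := by
    have : (1 : ℝ) - α ≠ 0 := by linarith
    positivity
  have key : ∀ v ∈ uIcc y 1,
      HasDerivAt (fun v => (y + c * v) ^ (1 - α) / (c * (1 - α))) ((y + c * v) ^ (-α)) v := by
    intro v hv
    rw [uIcc_of_le hy1] at hv
    have hb : 0 < y + c * v := base_pos hc hy hv.1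
    have h0 : HasDerivAt (fun v : ℝ => y + c * v) c v := by
      simpa using ((hasDerivAt_id v).const_mul c).const_add y
    have h1 : HasDerivAt (fun v : ℝ => (y + c * v) ^ (1 - α))
        ((1 - α) * (y + c * v) ^ (1 - α - 1) * c) v := by
      have := (Real.hasDerivAt_rpow_const (p := 1 - α) (Or.inl hb.ne')).comp v h0
      simpa [mul_assoc, Function.comp_def] using this
    have h2 := h1.div_const (c * (1 - α))
    have heq : (1 - α) * (y + c * v) ^ (1 - α - 1) * c / (c * (1 - α)) = (y + c * v) ^ (-α) := by
      rw [show (1 : ℝ) - α - 1 = -α by ring]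
      have h1a : (1 : ℝ) - α ≠ 0 := by linarith
      field_simp
    rwa [heq] at h2
  have hint : IntervalIntegrable (fun v => (y + c * v) ^ (-α)) volume y 1 :=
    (cont_base hc hy hy1).intervalIntegrable
  rw [intervalIntegral.integral_eq_sub_of_hasDerivAt key hint]
  rw [mul_one]
  ring


private lemma qAlpha_ge (hα1 : 1 < α) (hα2 : α < 2) (hc : 0 < c) (hy : 0 < y) (hy1 : y ≤ 1) :
    c ^ (-(α / 2)) * (y + c) ^ (α / 2) * (1 - ((1 + c) * y / (y + c)) ^ (α - 1))
      ≤ qAlpha α c y := by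
  rw [qAlpha, if_neg hy.ne']
  have hyc : 0 < y + c := by linarith
  have h1c : 0 < 1 + c := by linarith
  -- monotonicity of the integral
  have hmono : ((y + c) ^ (1 - α) - (y + c * y) ^ (1 - α)) / (c * (1 - α))
      ≤ ∫ v in y..1, (y + c * v) ^ (-α) * (1 - v) ^ (α / 2 - 1) := by
    rw [← integral_pow_eq hα1 hc hy hy1]
    refine intervalIntegral.integral_mono_ae_restrict hy1
      (cont_base hc hy hy1).intervalIntegrable (integrable_aux hα1 hc hy hy1) ?_
    have hae : ∀ᵐ v ∂(volume.restrict (Icc y 1)), v ≠ 1 := by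
      refine ae_restrict_of_ae ?_
      rw [ae_iff]
      simp only [ne_eq, not_not, setOf_eq_eq_singleton]
      exact measure_singleton 1
    have hin : ∀ᵐ v ∂(volume.restrict (Icc y 1)), v ∈ Icc y 1 :=
      ae_restrict_mem measurableSet_Icc
    filter_upwards [hae, hin] with v hv1 hv
    have h1v : 0 < 1 - v := by
      rcases lt_or_eq_of_le hv.2 with h | h
      · linarith
      · exact absurd h hv1
    have hone : (1 : ℝ) ≤ (1 - v) ^ (α / 2 - 1) := by
      have := Real.rpow_le_rpow_of_exponent_ge h1v (by linarith [hv.1] : 1 - v ≤ 1)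
        (by linarith : α / 2 - 1 ≤ (0 : ℝ))
      simpa [Real.rpow_zero] using this
    calc (y + c * v) ^ (-α) = (y + c * v) ^ (-α) * 1 := (mul_one _).symm
      _ ≤ (y + c * v) ^ (-α) * (1 - v) ^ (α / 2 - 1) :=
          mul_le_mul_of_nonneg_left hone
            (Real.rpow_nonneg (base_pos hc hy hv.1).le _)
  have hP : (0 : ℝ) ≤ (α - 1) * c ^ (1 - α / 2) * (1 + c) ^ (α - 1) * (y + c) ^ (α / 2)
      * y ^ (α - 1) := by
    have : (0:ℝ) < α - 1 := by linarith
    positivity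
  refine le_trans (le_of_eq ?_) (mul_le_mul_of_nonneg_left hmono hP)
  -- algebraic identity
  have ht : ((1 + c) * y / (y + c)) ^ (α - 1)
      = (1 + c) ^ (α - 1) * y ^ (α - 1) * ((y + c) ^ (α - 1))⁻¹ := by
    rw [Real.div_rpow (by positivity) hyc.le, Real.mul_rpow h1c.le hy.le, div_eq_mul_inv]
  have hyy : y + c * y = y * (1 + c) := by ring
  rw [ht, hyy, Real.mul_rpow hy.le h1c.le]
  have e1 : y ^ (1 - α) = (y ^ (α - 1))⁻¹ := by
    rw [show (1 : ℝ) - α = -(α - 1) by ring, Real.rpow_neg hy.le]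
  have e2 : (1 + c) ^ (1 - α) = ((1 + c) ^ (α - 1))⁻¹ := by
    rw [show (1 : ℝ) - α = -(α - 1) by ring, Real.rpow_neg h1c.le]
  have e3 : (y + c) ^ (1 - α) = ((y + c) ^ (α - 1))⁻¹ := by
    rw [show (1 : ℝ) - α = -(α - 1) by ring, Real.rpow_neg hyc.le]
  have e4 : c ^ (1 - α / 2) = c * (c ^ (α / 2))⁻¹ := by
    rw [show (1 : ℝ) - α / 2 = 1 + -(α / 2) by ring, Real.rpow_add hc, Real.rpow_one,
      Real.rpow_neg hc.le]
  have e5 : c ^ (-(α / 2)) = (c ^ (α / 2))⁻¹ := Real.rpow_neg hc.le _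
  rw [e1, e2, e3, e4, e5]
  have n1 : y ^ (α - 1) ≠ 0 := (Real.rpow_pos_of_pos hy _).ne'
  have n2 : (1 + c) ^ (α - 1) ≠ 0 := (Real.rpow_pos_of_pos h1c _).ne'
  have n3 : (y + c) ^ (α - 1) ≠ 0 := (Real.rpow_pos_of_pos hyc _).ne'
  have n4 : c ^ (α / 2) ≠ 0 := (Real.rpow_pos_of_pos hc _).ne'
  have n5 : (1 : ℝ) - α ≠ 0 := by linarith
  field_simp
  ring


private lemma qAlpha_le (hα1 : 1 < α) (hα2 : α < 2) (hc : 0 < c) (hy : 0 < y) (hy1 : y ≤ 1) :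
    qAlpha α c y ≤ c ^ (1 - α / 2) * (1 - y) ^ (α / 2) * (y + c) ^ (α / 2 - 1) := by
  rw [qAlpha, if_neg hy.ne']
  have hyc : 0 < y + c := by linarith
  have h1c : 0 < 1 + c := by linarith
  have hα1' : (0:ℝ) < α - 1 := by linarith
  set K : ℝ := (y + c) ^ (α / 2 - 1) / (α - 1) with hK
  have hKpos : 0 < K := div_pos (Real.rpow_pos_of_pos hyc _) hα1'
  set H : ℝ → ℝ := fun v => -(K * ((1 - v) ^ (α / 2) * (y + c * v) ^ (1 - α))) with hH
  set G : ℝ → ℝ := fun v =>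
    (K * ((y + c * v) ^ (-α) * (α / 2 * (y + c * v) + (α - 1) * (c * (1 - v)))))
      * (1 - v) ^ (α / 2 - 1) with hG
  have hcb : ∀ p : ℝ, ContinuousOn (fun v : ℝ => (y + c * v) ^ p) (Icc y 1) := by
    intro p
    have := cont_base (p := p) hc hy hy1
    rwa [uIcc_of_le hy1] at this
  -- FTC : ∫ G = H 1 - H y
  have hGint : IntervalIntegrable G volume y 1 := by
    apply (integrable_one_sub hα1 hy1).continuousOn_mul
    rw [uIcc_of_le hy1]
    apply ContinuousOn.mul continuousOn_const
    exact (hcb (-α)).mul (by fun_prop)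
  have hderiv : ∀ v ∈ Ioo y 1, HasDerivAt H (G v) v := by
    intro v hv
    have hb : 0 < y + c * v := base_pos hc hy hv.1.le
    have h1v : 0 < 1 - v := by linarith [hv.2]
    have h0 : HasDerivAt (fun v : ℝ => y + c * v) c v := by
      simpa using ((hasDerivAt_id v).const_mul c).const_add y
    have h0' : HasDerivAt (fun v : ℝ => 1 - v) (-1) v := by
      simpa using (hasDerivAt_id v).const_sub 1
    have d1 : HasDerivAt (fun v : ℝ => (1 - v) ^ (α / 2))
        (α / 2 * (1 - v) ^ (α / 2 - 1) * (-1)) v := by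
      have := (Real.hasDerivAt_rpow_const (p := α / 2) (Or.inl h1v.ne')).comp v h0'
      simpa [mul_assoc, Function.comp_def] using this
    have d2 : HasDerivAt (fun v : ℝ => (y + c * v) ^ (1 - α))
        ((1 - α) * (y + c * v) ^ (1 - α - 1) * c) v := by
      have := (Real.hasDerivAt_rpow_const (p := 1 - α) (Or.inl hb.ne')).comp v h0
      simpa [mul_assoc, Function.comp_def] using this
    have d3 := ((d1.mul d2).const_mul K).neg
    refine d3.congr_deriv ?_
    have r1 : (1 - v) ^ (α / 2) = (1 - v) ^ (α / 2 - 1) * (1 - v) := by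
      rw [show α / 2 = α / 2 - 1 + 1 by ring, Real.rpow_add h1v, Real.rpow_one]
      ring_nf
    have r2 : (y + c * v) ^ (1 - α) = (y + c * v) ^ (-α) * (y + c * v) := by
      rw [show (1:ℝ) - α = -α + 1 by ring, Real.rpow_add hb, Real.rpow_one]
    have r3 : (1:ℝ) - α - 1 = -α := by ring
    rw [hG, r3, r1, r2]
    ring
  have hcont : ContinuousOn H (Icc y 1) := by
    apply ContinuousOn.neg
    apply ContinuousOn.mul continuousOn_const
    exact (ContinuousOn.rpow_const (by fun_prop)
      (fun v _ => Or.inr (by positivity))).mul (hcb (1 - α))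
  have hFTC := intervalIntegral.integral_eq_sub_of_hasDerivAt_of_le hy1 hcont hderiv hGint
  -- pointwise comparison
  have hcomp : ∫ v in y..1, (y + c * v) ^ (-α) * (1 - v) ^ (α / 2 - 1)
      ≤ ∫ v in y..1, (y + c) ^ (-(α / 2)) * G v := by
    refine intervalIntegral.integral_mono_on hy1 (integrable_aux hα1 hc hy hy1)
      (hGint.const_mul _) ?_
    intro v hv
    have hb : 0 < y + c * v := base_pos hc hy hv.1
    have h1v : (0:ℝ) ≤ 1 - v := by linarith [hv.2]
    have hfac : (1:ℝ) ≤ (y + c) ^ (-(α / 2)) * K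
        * (α / 2 * (y + c * v) + (α - 1) * (c * (1 - v))) := by
      have hB : (α - 1) * (y + c) ≤ α / 2 * (y + c * v) + (α - 1) * (c * (1 - v)) := by
        nlinarith [hb.le]
      have hprod : (y + c) ^ (-(α / 2)) * K * ((α - 1) * (y + c)) = 1 := by
        have e' : (y + c) ^ (α / 2 - 1) = (y + c) ^ (α / 2) * (y + c)⁻¹ := by
          rw [show α / 2 - 1 = α / 2 + (-1) by ring, Real.rpow_add hyc, Real.rpow_neg_one]
        have e5 : (y + c) ^ (-(α / 2)) = ((y + c) ^ (α / 2))⁻¹ := Real.rpow_neg hyc.le _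
        have n3 : (y + c) ^ (α / 2) ≠ 0 := (Real.rpow_pos_of_pos hyc _).ne'
        rw [hK, e5, e']
        field_simp
      calc (1:ℝ) = (y + c) ^ (-(α / 2)) * K * ((α - 1) * (y + c)) := hprod.symm
        _ ≤ _ := by
            apply mul_le_mul_of_nonneg_left hB
            positivity
    calc (y + c * v) ^ (-α) * (1 - v) ^ (α / 2 - 1)
        = 1 * ((y + c * v) ^ (-α) * (1 - v) ^ (α / 2 - 1)) := (one_mul _).symm
      _ ≤ ((y + c) ^ (-(α / 2)) * K
            * (α / 2 * (y + c * v) + (α - 1) * (c * (1 - v))))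
          * ((y + c * v) ^ (-α) * (1 - v) ^ (α / 2 - 1)) := by
          apply mul_le_mul_of_nonneg_right hfac
          positivity
      _ = (y + c) ^ (-(α / 2)) * G v := by rw [hG]; ring
  rw [intervalIntegral.integral_const_mul, hFTC] at hcomp
  have hH1 : H 1 = 0 := by
    rw [hH]
    simp [Real.zero_rpow (by positivity : α / 2 ≠ 0)]
  have hHy : H y = -(K * ((1 - y) ^ (α / 2) * (y * (1 + c)) ^ (1 - α))) := by
    simp only [hH]
    rw [show y + c * y = y * (1 + c) by ring]
  rw [hH1, hHy] at hcomp
  have hP : (0 : ℝ) ≤ (α - 1) * c ^ (1 - α / 2) * (1 + c) ^ (α - 1) * (y + c) ^ (α / 2)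
      * y ^ (α - 1) := by
    have : (0:ℝ) < α - 1 := hα1'
    positivity
  refine le_trans (mul_le_mul_of_nonneg_left hcomp hP) (le_of_eq ?_)
  -- algebra
  rw [Real.mul_rpow hy.le h1c.le, hK]
  have e1 : y ^ (1 - α) = (y ^ (α - 1))⁻¹ := by
    rw [show (1 : ℝ) - α = -(α - 1) by ring, Real.rpow_neg hy.le]
  have e2 : (1 + c) ^ (1 - α) = ((1 + c) ^ (α - 1))⁻¹ := by
    rw [show (1 : ℝ) - α = -(α - 1) by ring, Real.rpow_neg h1c.le]
  have e5 : (y + c) ^ (-(α / 2)) = ((y + c) ^ (α / 2))⁻¹ := Real.rpow_neg hyc.le _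
  rw [e1, e2, e5]
  have n1 : y ^ (α - 1) ≠ 0 := (Real.rpow_pos_of_pos hy _).ne'
  have n2 : (1 + c) ^ (α - 1) ≠ 0 := (Real.rpow_pos_of_pos h1c _).ne'
  have n3 : (y + c) ^ (α / 2) ≠ 0 := (Real.rpow_pos_of_pos hyc _).ne'
  have n5 : α - 1 ≠ 0 := hα1'.ne'
  field_simp
  ring


/-- **Lemma 2.11**: for `α ∈ (1,2)`:
(a) `q_α(y;c) ≥ (α−1) c^{1−α/2} (c+y)^{α/2−1} (1−y)` for `0 ≤ y < 1` and `c > 0`;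
(b) `q_α(y;c) → 1` as `y → 0` for every `c > 0`;
(c) under hypotheses (I) and (S_α), for every `δ > 0`, `sup_{δ ≤ y ≤ 1} q_α(y;c) < 1`. -/
theorem qAlpha_bounds (α : ℝ) (hα1 : 1 < α) (hα2 : α < 2) :
    (∀ c : ℝ, 0 < c → ∀ y : ℝ, 0 ≤ y → y < 1 →
      (α - 1) * c ^ (1 - α / 2) * (c + y) ^ (α / 2 - 1) * (1 - y) ≤ qAlpha α c y) ∧
    (∀ c : ℝ, 0 < c → Tendsto (fun y => qAlpha α c y) (𝓝[>] (0 : ℝ)) (𝓝 1)) ∧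
    (∀ (Ω' : Type) (_ : MeasurableSpace Ω') (P : Measure Ω'), IsProbabilityMeasure P →
      ∀ ξ : ℕ → Ω' → ℤ, IsIID P ξ → HypI P ξ → HypS P ξ α →
        ∀ c : ℝ, 0 < c → ∀ δ : ℝ, 0 < δ →
          ∃ b : ℝ, b < 1 ∧ ∀ y : ℝ, δ ≤ y → y ≤ 1 → qAlpha α c y ≤ b) := by
  constructor
  · -- part (a)
    intro c hc y hy0 hy1
    rcases eq_or_lt_of_le hy0 with h | hy
    · subst h
      rw [qAlpha, if_pos rfl]
      have e : c ^ (1 - α / 2) * c ^ (α / 2 - 1) = 1 := by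
        rw [← Real.rpow_add hc, show 1 - α / 2 + (α / 2 - 1) = (0:ℝ) by ring, Real.rpow_zero]
      calc (α - 1) * c ^ (1 - α / 2) * (c + 0) ^ (α / 2 - 1) * (1 - 0)
          = (α - 1) * (c ^ (1 - α / 2) * c ^ (α / 2 - 1)) := by rw [add_zero]; ring
        _ = α - 1 := by rw [e, mul_one]
        _ ≤ 1 := by linarith
    · have hyc : 0 < y + c := by linarith
      have h1c : 0 < 1 + c := by linarith
      have hl := qAlpha_ge hα1 hα2 hc hy hy1.le
      set t : ℝ := (1 + c) * y / (y + c) with htdef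
      have ht0 : 0 ≤ t := by positivity
      have ht1 : t ≤ 1 := by
        rw [htdef, div_le_one hyc]
        nlinarith
      have gm := Real.geom_mean_le_arith_mean2_weighted
        (by linarith : (0:ℝ) ≤ α - 1) (by linarith : (0:ℝ) ≤ 2 - α) ht0 zero_le_one
        (by ring : α - 1 + (2 - α) = 1)
      rw [Real.one_rpow, mul_one] at gm
      have hber : (α - 1) * (1 - t) ≤ 1 - t ^ (α - 1) := by linarith
      have hmul : c ^ (-(α / 2)) * (y + c) ^ (α / 2) * ((α - 1) * (1 - t))
          ≤ c ^ (-(α / 2)) * (y + c) ^ (α / 2) * (1 - t ^ (α - 1)) :=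
        mul_le_mul_of_nonneg_left hber (by positivity)
      refine le_trans (le_of_eq ?_) (hmul.trans hl)
      have h1t : 1 - t = c * (1 - y) / (y + c) := by
        rw [htdef]
        field_simp
        ring
      rw [h1t, show c + y = y + c from add_comm c y]
      have e4 : c ^ (1 - α / 2) = c * (c ^ (α / 2))⁻¹ := by
        rw [show (1 : ℝ) - α / 2 = 1 + -(α / 2) by ring, Real.rpow_add hc, Real.rpow_one,
          Real.rpow_neg hc.le]
      have e5 : c ^ (-(α / 2)) = (c ^ (α / 2))⁻¹ := Real.rpow_neg hc.le _
      have e6 : (y + c) ^ (α / 2 - 1) = (y + c) ^ (α / 2) * (y + c)⁻¹ := by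
        rw [show α / 2 - 1 = α / 2 + (-1) by ring, Real.rpow_add hyc, Real.rpow_neg_one]
      rw [e4, e5, e6]
      have n4 : c ^ (α / 2) ≠ 0 := (Real.rpow_pos_of_pos hc _).ne'
      field_simp
  constructor
  · -- part (b)
    intro c hc
    have hc0 : (0:ℝ) + c ≠ 0 := by positivity
    have hLc : ContinuousAt
        (fun y : ℝ => c ^ (-(α / 2)) * (y + c) ^ (α / 2)
          * (1 - ((1 + c) * y / (y + c)) ^ (α - 1))) 0 := by
      apply ContinuousAt.mul
      · exact continuousAt_const.mul
          (ContinuousAt.rpow_const (by fun_prop) (Or.inl hc0))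
      · exact continuousAt_const.sub
          (ContinuousAt.rpow_const
            (ContinuousAt.div (by fun_prop) (by fun_prop) hc0)
            (Or.inr (by linarith)))
    have hUc : ContinuousAt
        (fun y : ℝ => c ^ (1 - α / 2) * (1 - y) ^ (α / 2) * (y + c) ^ (α / 2 - 1)) 0 := by
      apply ContinuousAt.mul
      · exact continuousAt_const.mul
          (ContinuousAt.rpow_const (by fun_prop) (Or.inl (by norm_num)))
      · exact ContinuousAt.rpow_const (by fun_prop) (Or.inl hc0)
    have hL0 : c ^ (-(α / 2)) * ((0:ℝ) + c) ^ (α / 2)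
        * (1 - ((1 + c) * 0 / ((0:ℝ) + c)) ^ (α - 1)) = 1 := by
      rw [mul_zero, zero_div, Real.zero_rpow (by linarith : α - 1 ≠ 0), sub_zero, mul_one,
        zero_add, ← Real.rpow_add hc, show -(α / 2) + α / 2 = (0:ℝ) by ring, Real.rpow_zero]
    have hU0 : c ^ (1 - α / 2) * ((1:ℝ) - 0) ^ (α / 2) * ((0:ℝ) + c) ^ (α / 2 - 1) = 1 := by
      rw [sub_zero, Real.one_rpow, mul_one, zero_add, ← Real.rpow_add hc,
        show 1 - α / 2 + (α / 2 - 1) = (0:ℝ) by ring, Real.rpow_zero]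
    have hLt : Tendsto
        (fun y : ℝ => c ^ (-(α / 2)) * (y + c) ^ (α / 2)
          * (1 - ((1 + c) * y / (y + c)) ^ (α - 1))) (𝓝[>] (0:ℝ)) (𝓝 1) := by
      have h := hLc.continuousWithinAt (s := Ioi (0:ℝ))
      rw [ContinuousWithinAt] at h
      simpa only [hL0] using h
    have hUt : Tendsto
        (fun y : ℝ => c ^ (1 - α / 2) * (1 - y) ^ (α / 2) * (y + c) ^ (α / 2 - 1))
        (𝓝[>] (0:ℝ)) (𝓝 1) := by
      have h := hUc.continuousWithinAt (s := Ioi (0:ℝ))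
      rw [ContinuousWithinAt] at h
      simpa only [hU0] using h
    refine tendsto_of_tendsto_of_tendsto_of_le_of_le' hLt hUt ?_ ?_
    · filter_upwards [Ioo_mem_nhdsGT_of_mem (⟨le_refl (0:ℝ), one_pos⟩ : (0:ℝ) ∈ Ico 0 1)]
        with y hy
      exact qAlpha_ge hα1 hα2 hc hy.1 hy.2.le
    · filter_upwards [Ioo_mem_nhdsGT_of_mem (⟨le_refl (0:ℝ), one_pos⟩ : (0:ℝ) ∈ Ico 0 1)]
        with y hy
      exact qAlpha_le hα1 hα2 hc hy.1 hy.2.le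
  · -- part (c)
    intro Ω' _ P _ ξ _ _ _ c hc δ hδ
    have hm0 : 0 < min δ 1 := lt_min hδ one_pos
    have hm1 : min δ 1 ≤ 1 := min_le_right _ _
    refine ⟨(1 - min δ 1) ^ (α / 2), ?_, ?_⟩
    · exact Real.rpow_lt_one (by linarith) (by linarith) (by linarith)
    · intro y hδy hy1
      have hy0 : 0 < y := hm0.trans_le ((min_le_left δ 1).trans hδy)
      have hyc : 0 < y + c := by linarith
      refine (qAlpha_le hα1 hα2 hc hy0 hy1).trans ?_
      have h2 : c ^ (1 - α / 2) * (y + c) ^ (α / 2 - 1) ≤ 1 := by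
        have e6 : (y + c) ^ (α / 2 - 1) = ((y + c) ^ (1 - α / 2))⁻¹ := by
          rw [show α / 2 - 1 = -(1 - α / 2) by ring, Real.rpow_neg hyc.le]
        rw [e6, ← div_eq_mul_inv, div_le_one (Real.rpow_pos_of_pos hyc _)]
        exact Real.rpow_le_rpow hc.le (by linarith) (by linarith)
      calc c ^ (1 - α / 2) * (1 - y) ^ (α / 2) * (y + c) ^ (α / 2 - 1)
          = (1 - y) ^ (α / 2) * (c ^ (1 - α / 2) * (y + c) ^ (α / 2 - 1)) := by ring
        _ ≤ (1 - y) ^ (α / 2) * 1 :=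
            mul_le_mul_of_nonneg_left h2 (Real.rpow_nonneg (by linarith) _)
        _ = (1 - y) ^ (α / 2) := mul_one _
        _ ≤ (1 - min δ 1) ^ (α / 2) := by
            apply Real.rpow_le_rpow (by linarith)
              (by linarith [(min_le_left δ 1).trans hδy]) (by linarith)


end IDLAPaper
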